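/- On a finite LTS, the fixed point of the partition refinement function F, started from the total relation, equals (strong) bisimilarity. -/
import Mathlib


/-- One refinement step of the standard partition refinement algorithm. -/
def prF {S A : Type*} (Tr : S → A → S → Prop) (P : S → S → Prop) :
    S → S → Prop := fun s t =>
  (∀ a s', Tr s a s' → ∃ t', Tr t a t' ∧ P s' t') ∧
  (∀ a t', Tr t a t' → ∃ s', Tr s a s' ∧ P s' t')

/-- Iteration of `F` starting from the total relation. -/
def prIter {S A : Type*} (Tr : S → A → S → Prop) : ℕ → (S → S → Prop)
  | 0 => fun _ _ => True
  | n + 1 => prF Tr (prIter Tr n)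

/-- Strong bisimilarity: the union of all (symmetric) bisimulations. -/
def Bisimilar {S A : Type*} (Tr : S → A → S → Prop) (s t : S) : Prop :=
  ∃ R : S → S → Prop, Symmetric R ∧
    (∀ s t, R s t → ∀ a s', Tr s a s' → ∃ t', Tr t a t' ∧ R s' t') ∧
    R s t

lemma prF_mono {S A : Type*} (Tr : S → A → S → Prop) {P Q : S → S → Prop}
    (h : ∀ s t, P s t → Q s t) : ∀ s t, prF Tr P s t → prF Tr Q s t := by
  intro s t ⟨h1, h2⟩
  exact ⟨fun a s' hs' => (h1 a s' hs').imp fun t' ⟨ht, hp⟩ => ⟨ht, h _ _ hp⟩,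
    fun a t' ht' => (h2 a t' ht').imp fun s' ⟨hs, hp⟩ => ⟨hs, h _ _ hp⟩⟩

lemma prIter_succ_le {S A : Type*} (Tr : S → A → S → Prop) :
    ∀ n s t, prIter Tr (n + 1) s t → prIter Tr n s t := by
  intro n
  induction n with
  | zero => intro s t _; trivial
  | succ n ih => exact prF_mono Tr ih

lemma prIter_le {S A : Type*} (Tr : S → A → S → Prop) {m k : ℕ} (h : m ≤ k) :
    ∀ s t, prIter Tr k s t → prIter Tr m s t := by
  induction h with
  | refl => exact fun _ _ h => h
  | step _ ih => exact fun s t hh => ih s t (prIter_succ_le Tr _ s t hh)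

lemma prIter_symm {S A : Type*} (Tr : S → A → S → Prop) :
    ∀ n, Symmetric (prIter Tr n) := by
  intro n
  induction n with
  | zero => intro s t _; trivial
  | succ n ih =>
    intro s t ⟨h1, h2⟩
    refine ⟨fun a t' ht' => ?_, fun a s' hs' => ?_⟩
    · obtain ⟨s', hs, hp⟩ := h2 a t' ht'
      exact ⟨s', hs, ih hp⟩
    · obtain ⟨t', ht, hp⟩ := h1 a s' hs'
      exact ⟨t', ht, ih hp⟩

lemma bisim_le_prIter {S A : Type*} (Tr : S → A → S → Prop)
    (R : S → S → Prop) (hsym : Symmetric R)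
    (hR : ∀ s t, R s t → ∀ a s', Tr s a s' → ∃ t', Tr t a t' ∧ R s' t') :
    ∀ n s t, R s t → prIter Tr n s t := by
  intro n
  induction n with
  | zero => intro s t _; trivial
  | succ n ih =>
    intro s t hst
    refine ⟨fun a s' hs' => ?_, fun a t' ht' => ?_⟩
    · obtain ⟨t', ht, hp⟩ := hR s t hst a s' hs'
      exact ⟨t', ht, ih _ _ hp⟩
    · obtain ⟨s', hs, hp⟩ := hR t s (hsym hst) a t' ht'
      exact ⟨s', hs, ih _ _ (hsym hp)⟩

/-- On a finite LTS, the iteration of the partition refinement function `F`,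
started from the total relation, terminates, and its fixed point equals
(strong) bisimilarity. -/
theorem partition_refinement_computes_bisimilarity {S A : Type*} [Fintype S]
    (Tr : S → A → S → Prop) :
    ∃ n, prIter Tr (n + 1) = prIter Tr n ∧
      ∀ s t, prIter Tr n s t ↔ Bisimilar Tr s t := by
  have hfin : Finite (S → S → Prop) := inferInstance
  obtain ⟨m, k, hne, heq⟩ :=
    Finite.exists_ne_map_eq_of_infinite (fun n : ℕ => prIter Tr n)
  wlog hmk : m < k generalizing m k
  · exact this k m hne.symm heq.symm (by omega)
  have hfix : prIter Tr (m + 1) = prIter Tr m := by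
    funext s t
    apply propext
    constructor
    · exact prIter_succ_le Tr m s t
    · intro h
      exact prIter_le Tr (by omega : m + 1 ≤ k) s t (heq ▸ h)
  refine ⟨m, hfix, fun s t => ?_⟩
  constructor
  · intro h
    exact ⟨prIter Tr m, prIter_symm Tr m, fun s t hst a s' hs' => by
      rw [← hfix] at hst; exact hst.1 a s' hs', h⟩
  · rintro ⟨R, hsym, hR, hst⟩
    exact bisim_le_prIter Tr R hsym hR m s t hst
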